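/- Let r1td, r2td, r1no, r2no, L1, L2, tc1 > 0 with tc1 < L2/r2td and λ := r1no/r1td + r2no/r2td - 1 < 0. Then the optimal value of: minimize t1 + t_no + t2 + max(0, tc1 - t2) subject to t1·r1td + t_no·r1no = L1, t2·r2td + t_no·r2no = L2, t1, t2, t_no ≥ 0, equals L1/r1td + L2/r2td, attained at t_no = 0, tk = Lk/rk_td. -/

import Mathlib

/-- finite cloud capacity, case `tc1 < L2/r2td` and negative NOMA
priority — pure TDMA is optimal. -/
theorem stmt_11 (r1td r2td r1no r2no L1 L2 tc1 : ℝ)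
    (hr1td : 0 < r1td) (hr2td : 0 < r2td) (hr1no : 0 < r1no) (hr2no : 0 < r2no)
    (hL1 : 0 < L1) (hL2 : 0 < L2) (htc1 : 0 < tc1)
    (hcase : tc1 < L2 / r2td)
    (hlam : r1no / r1td + r2no / r2td - 1 < 0) :
    IsLeast {v : ℝ | ∃ t1 t2 tno : ℝ, 0 ≤ t1 ∧ 0 ≤ t2 ∧ 0 ≤ tno ∧
        t1 * r1td + tno * r1no = L1 ∧ t2 * r2td + tno * r2no = L2 ∧
        v = t1 + tno + t2 + max 0 (tc1 - t2)}
      (L1 / r1td + L2 / r2td) ∧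
    (L1 / r1td) * r1td + 0 * r1no = L1 ∧
    (L2 / r2td) * r2td + 0 * r2no = L2 ∧
    L1 / r1td + 0 + L2 / r2td + max 0 (tc1 - L2 / r2td) =
      L1 / r1td + L2 / r2td := by
  have hmax0 : max 0 (tc1 - L2 / r2td) = 0 := max_eq_left (by linarith)
  have he1 : (L1 / r1td) * r1td + 0 * r1no = L1 := by field_simp; ring
  have he2 : (L2 / r2td) * r2td + 0 * r2no = L2 := by field_simp; ring
  refine ⟨⟨⟨L1 / r1td, L2 / r2td, 0, le_of_lt (div_pos hL1 hr1td),
    le_of_lt (div_pos hL2 hr2td), le_refl 0, he1, he2, by rw [hmax0]; ring⟩, ?_⟩,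
    he1, he2, by rw [hmax0]; ring⟩
  rintro v ⟨t1, t2, tno, h1, h2, h3, e1, e2, rfl⟩
  have ht1 : t1 = (L1 - tno * r1no) / r1td := by field_simp; linarith
  have ht2 : t2 = (L2 - tno * r2no) / r2td := by field_simp; linarith
  have key : L1 / r1td + L2 / r2td ≤ t1 + tno + t2 := by
    rw [ht1, ht2]
    have h4 : 0 ≤ tno * (1 - (r1no / r1td + r2no / r2td)) :=
      mul_nonneg h3 (by linarith)
    have : (L1 - tno * r1no) / r1td = L1 / r1td - tno * (r1no / r1td) := by
      field_simp
    rw [this]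
    have : (L2 - tno * r2no) / r2td = L2 / r2td - tno * (r2no / r2td) := by
      field_simp
    rw [this]
    nlinarith
  have : (0:ℝ) ≤ max 0 (tc1 - t2) := le_max_left _ _
  linarith
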